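/- (Lower bound on the size of the Levenshtein ball.) Let Γ be a finite type with 1 < |Γ|, let S be a nonempty list over Γ, and let k ≥ 1. Then the cardinality of 𝒮_k(S,Γ) = {S' : List Γ | d_lev(S, S') ≤ k} satisfies ∑_{i=0}^{k} |Γ|^i ≤ |𝒮_k(S,Γ)| (equivalently, (|Γ|^{k+1} − 1)/(|Γ| − 1) ≤ |𝒮_k(S,Γ)|). -/

import Mathlib

/-- The costs of the edit operations (as in the former `Mathlib.Data.List.EditDistance.Defs`). -/
structure Levenshtein.Cost (α β δ : Type*) where
  delete : α → δ
  insert : β → δ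
  substitute : α → β → δ

/-- The default cost: every deletion, insertion and (non-trivial) substitution costs 1. -/
def Levenshtein.defaultCost {α : Type*} [DecidableEq α] : Levenshtein.Cost α α ℕ where
  delete _ := 1
  insert _ := 1
  substitute a b := if a = b then 0 else 1

/-- One step of the dynamic programming algorithm for the Levenshtein distance. -/
def Levenshtein.impl {α β δ : Type*} [AddZeroClass δ] [Min δ]
    (C : Levenshtein.Cost α β δ) (xs : List α) (y : β)
    (d : {r : List δ // 0 < r.length}) : {r : List δ // 0 < r.length} :=
  let ⟨ds, w⟩ := d
  xs.zip (ds.zip ds.tail) |>.foldr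
    (init := ⟨[ds.getLast (List.length_pos_iff.mp w) + C.insert y], by simp⟩)
    (fun ⟨x, d₀, d₁⟩ ⟨r, w⟩ =>
      ⟨min (C.delete x + r[0]) (min (C.insert y + d₀) (C.substitute x y + d₁)) :: r, by simp⟩)

/-- The Levenshtein distances from every suffix of `xs` to `ys`. -/
def suffixLevenshtein {α β δ : Type*} [AddZeroClass δ] [Min δ]
    (C : Levenshtein.Cost α β δ) (xs : List α) (ys : List β) :
    {r : List δ // 0 < r.length} :=
  ys.foldr
    (Levenshtein.impl C xs)
    (xs.foldr (init := ⟨[0], by simp⟩) (fun a ⟨r, w⟩ => ⟨(C.delete a + r[0]) :: r, by simp⟩))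

/-- The Levenshtein distance between two lists, with costs `C`. -/
def levenshtein {α β δ : Type*} [AddZeroClass δ] [Min δ]
    (C : Levenshtein.Cost α β δ) (xs : List α) (ys : List β) : δ :=
  let ⟨r, w⟩ := suffixLevenshtein C xs ys
  r[0]

/-- The Levenshtein (edit) distance with unit costs. -/
def dlev {Γ : Type*} [DecidableEq Γ] (S S' : List Γ) : ℕ :=
  levenshtein Levenshtein.defaultCost S S'

@[simp] lemma Levenshtein.defaultCost_delete {α : Type*} [DecidableEq α] (a : α) :
    (Levenshtein.defaultCost : Levenshtein.Cost α α ℕ).delete a = 1 := rfl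

@[simp] lemma Levenshtein.defaultCost_insert {α : Type*} [DecidableEq α] (a : α) :
    (Levenshtein.defaultCost : Levenshtein.Cost α α ℕ).insert a = 1 := rfl

@[simp] lemma Levenshtein.defaultCost_substitute {α : Type*} [DecidableEq α] (a b : α) :
    (Levenshtein.defaultCost : Levenshtein.Cost α α ℕ).substitute a b = if a = b then 0 else 1 :=
  rfl

section LevAux
variable {α β δ : Type*} [AddZeroClass δ] [Min δ] (C : Levenshtein.Cost α β δ)

theorem lev_impl_cons {x : α} {xs : List α} {y : β} {d : δ} {ds : List δ} {w}
    (w' : 0 < List.length ds) :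
    Levenshtein.impl C (x :: xs) y ⟨d :: ds, w⟩ =
      let ⟨r, w⟩ := Levenshtein.impl C xs y ⟨ds, w'⟩
      ⟨min (C.delete x + r[0]) (min (C.insert y + d) (C.substitute x y + ds[0])) :: r,
        by simp⟩ :=
  match ds, w' with | _ :: _, _ => rfl

theorem lev_impl_cons_fst_zero {x : α} {xs : List α} {y : β} {d : δ} {ds : List δ} {w} (h)
    (w' : 0 < List.length ds) :
    (Levenshtein.impl C (x :: xs) y ⟨d :: ds, w⟩).1[0]'h =
      let ⟨r, w⟩ := Levenshtein.impl C xs y ⟨ds, w'⟩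
      min (C.delete x + r[0]) (min (C.insert y + d) (C.substitute x y + ds[0])) :=
  match ds, w' with | _ :: _, _ => rfl

theorem lev_impl_length {xs : List α} {y : β} (d : {r : List δ // 0 < r.length})
    (w : d.1.length = xs.length + 1) :
    (Levenshtein.impl C xs y d).1.length = xs.length + 1 := by
  induction xs generalizing d with
  | nil => rfl
  | cons x xs ih =>
    match d, w with
    | ⟨d₁ :: d₂ :: ds, _⟩, w =>
      rw [lev_impl_cons C (by simp)]
      simp only [List.length_cons]
      congr 1
      exact ih ⟨d₂ :: ds, (by simp)⟩ (by simpa using w)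

theorem lev_suffix_length (xs : List α) (ys : List β) :
    (suffixLevenshtein C xs ys).1.length = xs.length + 1 := by
  induction ys with
  | nil =>
    dsimp [suffixLevenshtein]
    induction xs with
    | nil => rfl
    | cons _ xs ih =>
      simp_all
  | cons y ys ih =>
    dsimp only [suffixLevenshtein, List.foldr]
    rw [lev_impl_length]
    exact ih

theorem lev_suffix_cons₂ (xs : List α) (y : β) (ys) :
    suffixLevenshtein C xs (y :: ys) = (Levenshtein.impl C xs) y (suffixLevenshtein C xs ys) :=
  rfl

theorem lev_suffix_cons₁_aux {α} {x y : {r : List α // 0 < r.length}}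
    (w₀ : x.1[0]'x.2 = y.1[0]'y.2) (w : x.1.tail = y.1.tail) : x = y := by
  match x, y with
  | ⟨hx :: tx, _⟩, ⟨hy :: ty, _⟩ => simp_all

theorem lev_suffix_cons₁ (x : α) (xs ys) :
    suffixLevenshtein C (x :: xs) ys =
      ⟨levenshtein C (x :: xs) ys :: (suffixLevenshtein C xs ys).1, by simp⟩ := by
  induction ys with
  | nil =>
    exact lev_suffix_cons₁_aux rfl rfl
  | cons y ys ih =>
    apply lev_suffix_cons₁_aux
    · rfl
    · rw [lev_suffix_cons₂ C (x :: xs), ih, lev_impl_cons]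
      · rfl
      · simp [lev_suffix_length]

theorem levenshtein_cons_cons (x : α) (xs : List α) (y : β) (ys : List β) :
    levenshtein C (x :: xs) (y :: ys) =
      min (C.delete x + levenshtein C xs (y :: ys))
        (min (C.insert y + levenshtein C (x :: xs) ys)
          (C.substitute x y + levenshtein C xs ys)) := by
  have h1 : levenshtein C (x :: xs) (y :: ys) =
      (suffixLevenshtein C (x :: xs) (y :: ys)).1[0]'(by simp [lev_suffix_length]) := rfl
  rw [h1]
  conv =>
    lhs
    dsimp only [lev_suffix_cons₂]
  simp only [lev_suffix_cons₁]
  rw [lev_impl_cons_fst_zero]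
  · cases xs with
    | nil => rfl
    | cons x' xs' =>
      rfl
  · simp [lev_suffix_length]

@[simp] theorem levenshtein_nil_nil : levenshtein C ([] : List α) ([] : List β) = 0 := rfl

@[simp] theorem levenshtein_nil_cons (y : β) (ys : List β) :
    levenshtein C ([] : List α) (y :: ys) = levenshtein C [] ys + C.insert y := by
  have : ∀ zs : List β, (suffixLevenshtein C ([] : List α) zs).1 = [levenshtein C [] zs] := by
    intro zs
    have hl := lev_suffix_length C ([] : List α) zs
    match h : (suffixLevenshtein C ([] : List α) zs), hl with
    | ⟨[a], _⟩, _ =>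
      simp only [levenshtein, h]
      rfl
  have e := this ys
  have h2 : levenshtein C ([] : List α) (y :: ys) =
      (suffixLevenshtein C [] ys).1.getLast
        (List.length_pos_iff.mp (suffixLevenshtein C [] ys).2) + C.insert y := rfl
  rw [h2]
  simp [e]

@[simp] theorem levenshtein_cons_nil (x : α) (xs : List α) :
    levenshtein C (x :: xs) ([] : List β) = C.delete x + levenshtein C xs [] := rfl

end LevAux

lemma lev_nil_eq {Γ : Type*} [DecidableEq Γ] (T : List Γ) :
    levenshtein Levenshtein.defaultCost ([] : List Γ) T = T.length := by
  induction T with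
  | nil => simp
  | cons y ys ih => simp [ih, Nat.add_comm]

lemma lev_append_le {Γ : Type*} [DecidableEq Γ] (S T : List Γ) :
    levenshtein Levenshtein.defaultCost S (S ++ T) ≤ T.length := by
  induction S with
  | nil => simp [lev_nil_eq]
  | cons x xs ih =>
    rw [List.cons_append, levenshtein_cons_cons]
    refine le_trans (le_trans (min_le_right _ _) (min_le_right _ _)) ?_
    simpa using ih

lemma length_le_lev {Γ : Type*} [DecidableEq Γ] (xs ys : List Γ) :
    ys.length ≤ xs.length + levenshtein Levenshtein.defaultCost xs ys := by
  induction xs generalizing ys with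
  | nil => simp [lev_nil_eq]
  | cons x xs ih =>
    induction ys with
    | nil => simp
    | cons y ys ihy =>
      rw [levenshtein_cons_cons]
      have h1 := ih (y :: ys)
      have h2 := ihy
      have h3 := ih ys
      rcases le_or_gt (Levenshtein.defaultCost.delete x +
          levenshtein Levenshtein.defaultCost xs (y :: ys))
          (min (Levenshtein.defaultCost.insert y +
              levenshtein Levenshtein.defaultCost (x :: xs) ys)
            (Levenshtein.defaultCost.substitute x y +
              levenshtein Levenshtein.defaultCost xs ys)) with h | h
      · rw [min_eq_left h]
        simp only [Levenshtein.defaultCost_delete] at *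
        simp at h1 ⊢
        omega
      · rw [min_eq_right h.le]
        rcases le_or_gt (Levenshtein.defaultCost.insert y +
            levenshtein Levenshtein.defaultCost (x :: xs) ys)
            (Levenshtein.defaultCost.substitute x y +
              levenshtein Levenshtein.defaultCost xs ys) with h' | h'
        · rw [min_eq_left h']
          simp at h2 ⊢
          omega
        · rw [min_eq_right h'.le]
          simp at h3 ⊢
          omega

lemma ncard_length_eq {Γ : Type*} [Fintype Γ] (i : ℕ) :
    ({l : List Γ | l.length = i}).ncard = Fintype.card Γ ^ i := by
  rw [← Nat.card_coe_set_eq]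
  have h : Nat.card (List.Vector Γ i) = Fintype.card Γ ^ i := by
    rw [Nat.card_eq_fintype_card, card_vector]
  exact h

/-- Lower bound on the size of the Levenshtein ball of radius `k`. -/
theorem sum_pow_le_ncard_ball {Γ : Type*} [DecidableEq Γ] [Fintype Γ]
    (hΓ : 1 < Fintype.card Γ) (S : List Γ) (hS : S ≠ []) (k : ℕ) (hk : 1 ≤ k) :
    ∑ i ∈ Finset.range (k + 1), (Fintype.card Γ) ^ i ≤
      Set.ncard {S' : List Γ | dlev S S' ≤ k} := by
  classical
  -- The ball is finite
  have hball : ({S' : List Γ | dlev S S' ≤ k}).Finite := by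
    apply Set.Finite.subset (List.finite_length_le Γ (S.length + k))
    intro S' hS'
    have := length_le_lev S S'
    simp only [Set.mem_setOf_eq, dlev] at hS' ⊢
    omega
  -- the finset of lists of length ≤ k
  set A : Finset (List Γ) := (List.finite_length_le Γ k).toFinset with hA
  -- each list of length ≤ k, appended to S, lands in the ball
  have hsub : ↑(A.image (fun T => S ++ T)) ⊆ {S' : List Γ | dlev S S' ≤ k} := by
    intro x hx
    simp only [Finset.coe_image, Set.mem_image, Finset.mem_coe, hA,
      Set.Finite.mem_toFinset, Set.mem_setOf_eq] at hx
    obtain ⟨T, hT, rfl⟩ := hx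
    exact le_trans (lev_append_le S T) hT
  have hcard : (A.image (fun T => S ++ T)).card = A.card := by
    apply Finset.card_image_of_injective
    intro a b h
    exact List.append_cancel_left h
  have hAcard : A.card = ∑ i ∈ Finset.range (k + 1), (Fintype.card Γ) ^ i := by
    have : A = (Finset.range (k + 1)).biUnion
        (fun i => (List.finite_length_eq Γ i).toFinset) := by
      ext l
      simp only [hA, Set.Finite.mem_toFinset, Set.mem_setOf_eq, Finset.mem_biUnion,
        Finset.mem_range]
      constructor
      · intro h; exact ⟨l.length, by omega, rfl⟩
      · rintro ⟨i, hi, rfl⟩; omega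
    rw [this, Finset.card_biUnion]
    · apply Finset.sum_congr rfl
      intro i _
      rw [← Set.ncard_eq_toFinset_card _ (List.finite_length_eq Γ i), ncard_length_eq]
    · intro i _ j _ hij
      simp only [Finset.disjoint_left, Set.Finite.mem_toFinset, Set.mem_setOf_eq]
      rintro l rfl h
      exact hij h
  calc ∑ i ∈ Finset.range (k + 1), (Fintype.card Γ) ^ i
      = (A.image (fun T => S ++ T)).card := by rw [hcard, hAcard]
    _ = (↑(A.image (fun T => S ++ T)) : Set (List Γ)).ncard := (Set.ncard_coe_finset _).symm
    _ ≤ Set.ncard {S' : List Γ | dlev S S' ≤ k} := Set.ncard_le_ncard hsub hball
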